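/- Let Π be a nonempty policy class over the grid state space with binary actions satisfying stationarity. Then min{dim_S(Π), H + 1} ≤ 𝔠(Π), where dim_S(Π) is the star number of Π. -/
import Mathlib


/-- A deterministic MDP over a layered state space. -/
structure DetMDP (S : ℕ → Type) (A : Type) where
  start : S 0
  step : ∀ h : ℕ, S h → A → S (h + 1)

/-- The trajectory of a policy in a deterministic MDP. -/
def DetMDP.traj {S : ℕ → Type} {A : Type} (M : DetMDP S A) (π : ∀ h : ℕ, S h → A) :
    ∀ h : ℕ, S h
  | 0 => M.start
  | h + 1 => M.step h (M.traj π h) (π h (M.traj π h))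

/-- Reachability of a state-action pair at layer `h` by the class `P` in `M`. -/
def Reachable {S : ℕ → Type} {A : Type} (M : DetMDP S A) (P : Set (∀ h : ℕ, S h → A))
    (h : ℕ) (s : S h) (a : A) : Prop :=
  ∃ π ∈ P, M.traj π h = s ∧ π h s = a

/-- Cumulative reachability at layer `h`. -/
noncomputable def Creach {S : ℕ → Type} {A : Type} (M : DetMDP S A)
    (P : Set (∀ h : ℕ, S h → A)) (h : ℕ) : ℕ :=
  Set.ncard {p : S h × A | Reachable M P h p.1 p.2}

/-- Spanning capacity of `P` with horizon `H`. -/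
noncomputable def spanCap (H : ℕ) (S : ℕ → Type) (A : Type)
    (P : Set (∀ h : ℕ, S h → A)) : ℕ :=
  sSup {n : ℕ | ∃ h < H, ∃ M : DetMDP S A, n = Creach M P h}

/-- The policy class `P` over the grid state space is stationary: every policy takes the
same action on the states `s_(j,1), …, s_(j,H)` of a given index `j` (here: on `s_(j,h)`
for every layer `h`).  We write `π 0 j` for this common value `π(j)`. -/
def Stationary (K : ℕ) (P : Set (∀ _ : ℕ, Fin K → Bool)) : Prop :=
  ∀ π ∈ P, ∀ j : Fin K, ∀ h h' : ℕ, π h j = π h' j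

/-- A star witness of length `N` for the class `P` with respect to the base policy `πb`:
indices `j_1, …, j_N` and policies `π_1, …, π_N ∈ P` such that for every `l`,
`π_l(j_l) ≠ π̄(j_l)` while `π_l(j_k) = π̄(j_k)` for every `k ≠ l`. -/
def StarWitness (K : ℕ) (P : Set (∀ _ : ℕ, Fin K → Bool))
    (πb : ∀ _ : ℕ, Fin K → Bool) (N : ℕ) : Prop :=
  ∃ (j : Fin N → Fin K) (p : Fin N → ∀ _ : ℕ, Fin K → Bool),
    (∀ l : Fin N, p l ∈ P) ∧
    ∀ l : Fin N, p l 0 (j l) ≠ πb 0 (j l) ∧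
      ∀ k : Fin N, k ≠ l → p l 0 (j k) = πb 0 (j k)

/-- The star number `dim_S(P) = sup_{π̄ ∈ P} dim_S(P; π̄)`: the length of the longest star
witness with respect to some base policy of `P`. -/
noncomputable def dimS (K : ℕ) (P : Set (∀ _ : ℕ, Fin K → Bool)) : ℕ :=
  sSup {N : ℕ | ∃ πb ∈ P, StarWitness K P πb N}


/-- Auxiliary chain MDP used in the lower bound construction. -/
def chainMDP (K t : ℕ) (j : ℕ → Fin K) (base : Fin K → Bool) :
    DetMDP (fun _ => Fin K) Bool where
  start := j 0
  step h s a := if h + 1 < t ∧ s = j h ∧ a = base s then j (h + 1) else s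

/-- For every nonempty stationary policy class `P` over the grid state
space with binary actions, `min {dim_S(P), H + 1} ≤ 𝔠(P)`. -/
theorem star_le_spanCap (K H : ℕ) (hH : 1 ≤ H) (hK : 1 ≤ K)
    (P : Set (∀ _ : ℕ, Fin K → Bool)) (hne : P.Nonempty) (hstat : Stationary K P) :
    min (dimS K P) (H + 1) ≤ spanCap H (fun _ => Fin K) Bool P := by
  have h0SW : 0 ∈ {N : ℕ | ∃ πb ∈ P, StarWitness K P πb N} := by
    obtain ⟨π0, hπ0⟩ := hne
    exact ⟨π0, hπ0, Fin.elim0, Fin.elim0, fun l => l.elim0, fun l => l.elim0⟩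
  have hbddSW : BddAbove {N : ℕ | ∃ πb ∈ P, StarWitness K P πb N} := by
    refine ⟨K, fun N hN => ?_⟩
    obtain ⟨πb, hπb, j, p, hpP, hstar⟩ := hN
    have hjinj : Function.Injective j := by
      intro k l hkl
      by_contra hne'
      have h1 := (hstar l).1
      have h2 := (hstar l).2 k (fun h => hne' h)
      rw [hkl] at h2
      exact h1 h2
    simpa using Fintype.card_le_of_injective j hjinj
  have hdim : dimS K P ∈ {N : ℕ | ∃ πb ∈ P, StarWitness K P πb N} :=
    Nat.sSup_mem ⟨0, h0SW⟩ hbddSW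
  set N := dimS K P with hNdef
  rcases Nat.eq_zero_or_pos N with hN0 | hN0
  · omega
  obtain ⟨πb, hπb, j, p, hpP, hstar⟩ := hdim
  have hjinj : ∀ k l : Fin N, j k = j l → k = l := by
    intro k l hkl
    by_contra hne'
    have h1 := (hstar l).1
    have h2 := (hstar l).2 k hne'
    rw [hkl] at h2
    exact h1 h2
  set t := min N H with htdef
  have ht1 : 1 ≤ t := by omega
  have htN : t ≤ N := min_le_left _ _
  have htH : t ≤ H := min_le_right _ _
  set j' : ℕ → Fin K := fun h => if hh : h < N then j ⟨h, hh⟩ else j ⟨0, hN0⟩ with hj'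
  have hj'eq : ∀ (h : ℕ) (hh : h < N), j' h = j ⟨h, hh⟩ := by
    intro h hh
    simp only [hj', dif_pos hh]
  have hj'inj : ∀ a b : ℕ, a < N → b < N → j' a = j' b → a = b := by
    intro a b ha hb hab
    rw [hj'eq a ha, hj'eq b hb] at hab
    have := hjinj _ _ hab
    exact congrArg Fin.val this
  set M := chainMDP K t j' (πb 0) with hM
  have hstep : ∀ (h : ℕ) (s : Fin K) (a : Bool),
      M.step h s a = if h + 1 < t ∧ s = j' h ∧ a = πb 0 s then j' (h + 1) else s := by
    intro h s a; rfl
  -- trajectory of the base policy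
  have trajb : ∀ h, h < t → M.traj πb h = j' h := by
    intro h
    induction h with
    | zero => intro _; rfl
    | succ h ih =>
      intro hh
      have hht : h < t := by omega
      show M.step h (M.traj πb h) (πb h (M.traj πb h)) = j' (h + 1)
      rw [ih hht, hstep]
      rw [if_pos ⟨hh, rfl, hstat πb hπb (j' h) h 0⟩]
  -- trajectory of the deviating policies, before the deviation
  have trajA : ∀ l : Fin N, l.val < t → ∀ h, h ≤ l.val → M.traj (p l) h = j' h := by
    intro l hl h
    induction h with
    | zero => intro _; rfl
    | succ h ih =>
      intro hh
      have hhN : h < N := by omega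
      show M.step h (M.traj (p l) h) (p l h (M.traj (p l) h)) = j' (h + 1)
      rw [ih (by omega), hstep]
      have hact : p l h (j' h) = πb 0 (j' h) := by
        have h1 : p l h (j' h) = p l 0 (j' h) := hstat (p l) (hpP l) (j' h) h 0
        have h2 := (hstar l).2 ⟨h, hhN⟩ (by
          intro hc
          have : h = l.val := congrArg Fin.val hc
          omega)
        rw [h1, hj'eq h hhN]
        exact h2
      rw [if_pos ⟨by omega, rfl, hact⟩]
  -- trajectory of the deviating policies, after the deviation
  have trajB : ∀ l : Fin N, l.val < t → ∀ h, l.val ≤ h → M.traj (p l) h = j' l.val := by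
    intro l hl
    have key : ∀ d : ℕ, M.traj (p l) (l.val + d) = j' l.val := by
      intro d
      induction d with
      | zero => exact trajA l hl l.val le_rfl
      | succ d ih =>
        show M.step (l.val + d) (M.traj (p l) (l.val + d))
            (p l (l.val + d) (M.traj (p l) (l.val + d))) = j' l.val
        rw [ih, hstep]
        rw [if_neg]
        rintro ⟨hc1, hc2, hc3⟩
        have hlN : l.val < N := l.isLt
        have hd0 : d = 0 := by
          have := hj'inj l.val (l.val + d) hlN (by omega) hc2
          omega
        subst hd0
        have h1 : p l (l.val + 0) (j' l.val) = p l 0 (j' l.val) :=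
          hstat (p l) (hpP l) (j' l.val) _ 0
        rw [h1] at hc3
        rw [hj'eq l.val hlN] at hc3
        have : (⟨l.val, hlN⟩ : Fin N) = l := rfl
        rw [this] at hc3
        exact (hstar l).1 hc3
    intro h hh
    have := key (h - l.val)
    rwa [show l.val + (h - l.val) = h by omega] at this
  have hboolne : ∀ a b : Bool, a ≠ b → a = !b := by decide
  -- the reachable pairs
  have hreach1 : ∀ l : Fin N, l.val < t →
      Reachable M P (t - 1) (j' l.val) (!(πb 0 (j' l.val))) := by
    intro l hl
    refine ⟨p l, hpP l, trajB l hl (t - 1) (by omega), ?_⟩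
    have h1 : p l (t - 1) (j' l.val) = p l 0 (j' l.val) :=
      hstat (p l) (hpP l) (j' l.val) _ 0
    rw [h1]
    have hlN : l.val < N := l.isLt
    rw [hj'eq l.val hlN]
    have : (⟨l.val, hlN⟩ : Fin N) = l := rfl
    rw [this]
    exact hboolne _ _ (hstar l).1
  have hreach2 : Reachable M P (t - 1) (j' (t - 1)) (πb 0 (j' (t - 1))) :=
    ⟨πb, hπb, trajb (t - 1) (by omega), hstat πb hπb (j' (t - 1)) (t - 1) 0⟩
  -- an injection from Fin (t+1) into the reachable set
  set RS := {q : Fin K × Bool | Reachable M P (t - 1) q.1 q.2} with hRS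
  have hGmem : ∀ i : Fin (t + 1),
      (if i.val < t then ((j' i.val, !(πb 0 (j' i.val))) : Fin K × Bool)
        else (j' (t - 1), πb 0 (j' (t - 1)))) ∈ RS := by
    intro i
    by_cases hi : i.val < t
    · rw [if_pos hi]
      exact hreach1 ⟨i.val, by omega⟩ hi
    · rw [if_neg hi]
      exact hreach2
  set G : Fin (t + 1) → RS := fun i =>
    ⟨if i.val < t then ((j' i.val, !(πb 0 (j' i.val))) : Fin K × Bool)
      else (j' (t - 1), πb 0 (j' (t - 1))), hGmem i⟩ with hG
  have hGinj : Function.Injective G := by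
    intro i i' hii
    have heq : (if i.val < t then ((j' i.val, !(πb 0 (j' i.val))) : Fin K × Bool)
        else (j' (t - 1), πb 0 (j' (t - 1))))
        = (if i'.val < t then ((j' i'.val, !(πb 0 (j' i'.val))) : Fin K × Bool)
        else (j' (t - 1), πb 0 (j' (t - 1)))) := congrArg Subtype.val hii
    by_cases hi : i.val < t <;> by_cases hi' : i'.val < t
    · rw [if_pos hi, if_pos hi'] at heq
      have h1 : j' i.val = j' i'.val := congrArg Prod.fst heq
      have := hj'inj i.val i'.val (by omega) (by omega) h1
      exact Fin.ext this
    · rw [if_pos hi, if_neg hi'] at heq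
      have h1 : j' i.val = j' (t - 1) := congrArg Prod.fst heq
      have h2 : (!(πb 0 (j' i.val))) = πb 0 (j' (t - 1)) := congrArg Prod.snd heq
      rw [← h1] at h2
      exact absurd h2 (by cases πb 0 (j' i.val) <;> simp)
    · rw [if_neg hi, if_pos hi'] at heq
      have h1 : j' (t - 1) = j' i'.val := congrArg Prod.fst heq
      have h2 : πb 0 (j' (t - 1)) = !(πb 0 (j' i'.val)) := congrArg Prod.snd heq
      rw [← h1] at h2
      exact absurd h2 (by cases πb 0 (j' (t - 1)) <;> simp)
    · exact Fin.ext (by omega)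
  have hcard : t + 1 ≤ Creach M P (t - 1) := by
    have h1 : Nat.card (Fin (t + 1)) ≤ Nat.card RS :=
      Nat.card_le_card_of_injective G hGinj
    have h2 : Creach M P (t - 1) = Nat.card RS := by
      rw [Creach, ← Nat.card_coe_set_eq]
    rw [h2]
    simpa using h1
  -- conclude
  have hbdd : BddAbove {n : ℕ | ∃ h < H, ∃ M : DetMDP (fun _ => Fin K) Bool,
      n = Creach M P h} := by
    refine ⟨Nat.card (Fin K × Bool), ?_⟩
    rintro n ⟨h, _, M', rfl⟩
    rw [Creach]
    calc Set.ncard {q : Fin K × Bool | Reachable M' P h q.1 q.2}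
        ≤ Set.ncard (Set.univ : Set (Fin K × Bool)) :=
          Set.ncard_le_ncard (Set.subset_univ _) Set.finite_univ
      _ = Nat.card (Fin K × Bool) := Set.ncard_univ _
  have hmem : Creach M P (t - 1) ∈ {n : ℕ | ∃ h < H, ∃ M : DetMDP (fun _ => Fin K) Bool,
      n = Creach M P h} := ⟨t - 1, by omega, M, rfl⟩
  calc min N (H + 1) ≤ t + 1 := by omega
    _ ≤ Creach M P (t - 1) := hcard
    _ ≤ spanCap H (fun _ => Fin K) Bool P := le_csSup hbdd hmem
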